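/- arXiv:1107.4111 — 4 statements merged into one kernel-verified Lean document; each statement's English description precedes it below -/
import Mathlib

section
/- Let n ≥ 2 be an integer. There exists a constant c > 0, depending only on n, such that for every number field K of degree n over ℚ there is a nonzero algebraic integer α in the ring of integers of K with Tr_{K/ℚ}(α) = 0 and |σ(α)| ≤ c · |d_K|^{1/(2(n-1))} for every field embedding σ : K → ℂ, where d_K denotes the discriminant of K. -/
open NumberField NumberField.InfinitePlace NumberField.mixedEmbedding Module MeasureTheory
open scoped Classical ENNReal NNReal

lemma my_trace_int (K : Type) [Field K] [NumberField K] (a : 𝓞 K) :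
    ∃ t : ℤ, (t : ℚ) = Algebra.trace ℚ K (a : K) := by
  have h : IsIntegral ℤ (Algebra.trace ℚ K (a : K)) :=
    Algebra.isIntegral_trace (R := ℤ) a.isIntegral_coe
  exact IsIntegrallyClosed.isIntegral_iff.mp h

lemma my_exists_alpha (K : Type) [Field K] [NumberField K] (a : 𝓞 K) (M : ℝ)
    (hirr : ∀ q : ℚ, (a : K) ≠ algebraMap ℚ K q)
    (hM : ∀ σ : K →+* ℂ, ‖σ (a : K)‖ ≤ M) :
    ∃ α : 𝓞 K, α ≠ 0 ∧ Algebra.trace ℚ K (α : K) = 0 ∧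
      ∀ σ : K →+* ℂ, ‖σ (α : K)‖ ≤ 2 * (finrank ℚ K) * M := by
  obtain ⟨t, ht⟩ := my_trace_int K a
  set n := finrank ℚ K with hn
  have hn0 : (n : ℚ) ≠ 0 := Nat.cast_ne_zero.mpr finrank_pos.ne'
  have hcoe : ((((n : 𝓞 K) * a - (t : 𝓞 K)) : 𝓞 K) : K) = (n : K) * (a : K) - (t : K) := by
    simp [map_sub, map_mul]
  refine ⟨(n : 𝓞 K) * a - (t : 𝓞 K), ?_, ?_, ?_⟩
  · intro h0
    apply hirr ((t : ℚ) / (n : ℚ))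
    have h1 : (n : K) * (a : K) - (t : K) = 0 := by
      rw [← hcoe, h0]; simp
    have hnK : (n : K) ≠ 0 := Nat.cast_ne_zero.mpr finrank_pos.ne'
    rw [map_div₀, map_intCast, map_natCast, eq_div_iff hnK]
    linear_combination h1
  · rw [hcoe, map_sub]
    rw [show ((n : K) * (a : K)) = (n : ℚ) • (a : K) by rw [Algebra.smul_def, map_natCast],
      LinearMap.map_smul,
      (map_intCast (algebraMap ℚ K) t).symm,
      Algebra.trace_algebraMap, ← ht]
    simp [smul_eq_mul, ← hn]
  · intro σ
    have hM0 : 0 ≤ M := le_trans (norm_nonneg _) (hM σ)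
    have htr : ‖(t : ℂ)‖ ≤ (n : ℝ) * M := by
      have h2 : algebraMap ℚ ℂ (Algebra.trace ℚ K (a : K)) = ∑ σ' : K →ₐ[ℚ] ℂ, σ' (a : K) :=
        trace_eq_sum_embeddings ℂ
      rw [← ht] at h2
      have h3 : ((t : ℂ)) = ∑ σ' : K →ₐ[ℚ] ℂ, σ' (a : K) := by
        rw [← h2, map_intCast]
      rw [h3]
      calc ‖∑ σ' : K →ₐ[ℚ] ℂ, σ' (a : K)‖
          ≤ ∑ σ' : K →ₐ[ℚ] ℂ, ‖σ' (a : K)‖ := by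
            exact norm_sum_le _ _
        _ ≤ ∑ _σ' : K →ₐ[ℚ] ℂ, M := Finset.sum_le_sum fun σ' _ => hM σ'.toRingHom
        _ = (Fintype.card (K →ₐ[ℚ] ℂ)) * M := by rw [Finset.sum_const, Finset.card_univ,
            nsmul_eq_mul]
        _ = (n : ℝ) * M := by rw [AlgHom.card]
    have hσ : σ ((((n : 𝓞 K) * a - (t : 𝓞 K)) : 𝓞 K) : K) = (n : ℂ) * σ (a : K) - (t : ℂ) := by
      rw [hcoe, map_sub, map_mul, map_natCast, map_intCast]
    rw [hσ]
    calc ‖(n : ℂ) * σ (a : K) - (t : ℂ)‖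
        ≤ ‖(n : ℂ) * σ (a : K)‖ + ‖(t : ℂ)‖ := by
          exact norm_sub_le _ _
      _ ≤ (n : ℝ) * M + (n : ℝ) * M := by
          refine add_le_add ?_ htr
          rw [norm_mul, Complex.norm_natCast]
          exact mul_le_mul_of_nonneg_left (hM σ) (Nat.cast_nonneg n)
      _ = 2 * (n : ℝ) * M := by ring

lemma my_mink_le (K : Type) [Field K] [NumberField K] :
    minkowskiBound K ↑1 ≤ (2 : ℝ≥0∞) ^ finrank ℚ K * NNReal.sqrt ‖discr K‖₊ := by
  rw [minkowskiBound, volume_fundamentalDomain_fractionalIdealLatticeBasis,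
      volume_fundamentalDomain_latticeBasis, mixedEmbedding.finrank, Units.val_one,
      FractionalIdeal.absNorm_one]
  calc ENNReal.ofReal ((1 : ℚ) : ℝ) * ((2 : ℝ≥0∞)⁻¹ ^ nrComplexPlaces K * NNReal.sqrt ‖discr K‖₊) *
        (2 : ℝ≥0∞) ^ finrank ℚ K
      ≤ 1 * (1 * NNReal.sqrt ‖discr K‖₊) * (2 : ℝ≥0∞) ^ finrank ℚ K := by
        gcongr
        · simp
        · exact pow_le_one' (ENNReal.inv_le_one.mpr one_le_two) _
    _ = (2 : ℝ≥0∞) ^ finrank ℚ K * NNReal.sqrt ‖discr K‖₊ := by ring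

lemma my_rat_case (K : Type) [Field K] [NumberField K] (a : 𝓞 K) (ha : a ≠ 0) (q : ℚ)
    (hq : (a : K) = algebraMap ℚ K q) : ∃ m : ℤ, m ≠ 0 ∧ (m : ℚ) = q := by
  have hint : IsIntegral ℤ (algebraMap ℚ K q) := hq ▸ a.isIntegral_coe
  rw [isIntegral_algebraMap_iff (algebraMap ℚ K).injective] at hint
  obtain ⟨m, hm⟩ := IsIntegrallyClosed.isIntegral_iff.mp hint
  refine ⟨m, ?_, hm⟩
  rintro rfl
  apply ha
  have : (a : K) = 0 := by rw [hq, ← hm]; simp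
  exact RingOfIntegers.coe_eq_zero_iff.mp this

lemma my_exists_small (K : Type) [Field K] [NumberField K] (hn : 2 ≤ finrank ℚ K) (B : ℝ≥0)
    (hB1 : 1 ≤ B)
    (hB : (2 : ℝ≥0∞) ^ finrank ℚ K * NNReal.sqrt ‖discr K‖₊ <
      (2 : ℝ≥0∞)⁻¹ * (B : ℝ≥0∞) ^ (finrank ℚ K - 1)) :
    ∃ a : 𝓞 K, (∀ q : ℚ, (a : K) ≠ algebraMap ℚ K q) ∧
      ∀ σ : K →+* ℂ, ‖σ (a : K)‖ ≤ 1 + (B : ℝ) := by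
  obtain ⟨w₀⟩ := (inferInstance : Nonempty (InfinitePlace K))
  have hsum : ∑ w : InfinitePlace K, mult w = finrank ℚ K := sum_mult_eq
  have herase : ∑ w ∈ Finset.univ.erase w₀, mult w + mult w₀ = finrank ℚ K := by
    rw [Finset.sum_erase_add _ _ (Finset.mem_univ w₀)]; exact hsum
  have hB1' : (1 : ℝ) ≤ (B : ℝ) := by exact_mod_cast hB1
  by_cases hw₀ : IsReal w₀
  · -- real place case
    set f : InfinitePlace K → ℝ≥0 := fun w => if w = w₀ then 2⁻¹ else B with hf
    have hfw₀ : f w₀ = 2⁻¹ := by simp [hf]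
    have hfw : ∀ w, w ≠ w₀ → f w = B := fun w hw => by simp [hf, hw]
    have hmult : mult w₀ = 1 := by rw [mult, if_pos hw₀]
    have hprod : ∏ w : InfinitePlace K, f w ^ mult w =
        2⁻¹ * B ^ (finrank ℚ K - 1) := by
      rw [← Finset.prod_erase_mul _ _ (Finset.mem_univ w₀),
        Finset.prod_congr rfl (fun w hw => by rw [hfw w (Finset.ne_of_mem_erase hw)]),
        Finset.prod_pow_eq_pow_sum,
        show ∑ w ∈ Finset.univ.erase w₀, mult w = finrank ℚ K - 1 from by omega,
        hfw₀, hmult, pow_one, mul_comm]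
    have hvol : minkowskiBound K ↑1 < volume (convexBodyLT K f) := by
      rw [convexBodyLT_volume, hprod]
      refine lt_of_le_of_lt (my_mink_le K) (lt_of_lt_of_le hB ?_)
      have h9 : (2 : ℝ≥0∞)⁻¹ * (B : ℝ≥0∞) ^ (finrank ℚ K - 1) =
          ((2⁻¹ * B ^ (finrank ℚ K - 1) : ℝ≥0) : ℝ≥0∞) := by
        rw [ENNReal.coe_mul, ENNReal.coe_pow, ENNReal.coe_inv two_ne_zero]
        norm_num
      rw [h9]
      exact le_mul_of_one_le_left zero_le
        (by exact_mod_cast one_le_convexBodyLTFactor K)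
    obtain ⟨a, h_nz, h_le⟩ := exists_ne_zero_mem_ringOfIntegers_lt K hvol
    refine ⟨a, ?_, ?_⟩
    · intro q hq
      obtain ⟨m, hm0, hmq⟩ := my_rat_case K a h_nz q hq
      have h1 : w₀ (a : K) < ((2⁻¹ : ℝ≥0) : ℝ) := by rw [← hfw₀]; exact h_le w₀
      have h2 : (a : K) = ((m : ℤ) : K) := by rw [hq, ← hmq, map_intCast]
      have h3 : w₀ (a : K) = ‖embedding w₀ (a : K)‖ := by
        exact (norm_embedding_eq w₀ _).symm
      rw [h3, h2, map_intCast] at h1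
      have h4 : (1 : ℝ) ≤ ‖(m : ℂ)‖ := by
        rw [Complex.norm_intCast]
        exact_mod_cast Int.one_le_abs hm0
      have h5 : ((2⁻¹ : ℝ≥0) : ℝ) = 2⁻¹ := by norm_num
      rw [h5] at h1
      linarith
    · intro σ
      have h6 := h_le (mk σ)
      rw [InfinitePlace.apply] at h6
      refine le_trans h6.le ?_
      by_cases h : mk σ = w₀
      · rw [h, hfw₀]
        have : ((2⁻¹ : ℝ≥0) : ℝ) = 2⁻¹ := by norm_num
        rw [this]; linarith
      · rw [hfw _ h]; linarith
  · -- complex place case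
    rw [not_isReal_iff_isComplex] at hw₀
    set f : InfinitePlace K → ℝ≥0 := fun w => if w = w₀ then NNReal.sqrt B else B with hf
    have hfw₀ : f w₀ = NNReal.sqrt B := by simp [hf]
    have hfw : ∀ w, w ≠ w₀ → f w = B := fun w hw => by simp [hf, hw]
    have hmult : mult w₀ = 2 := by rw [mult, if_neg (not_isReal_iff_isComplex.mpr hw₀)]
    have hprod : ∏ w : InfinitePlace K, f w ^ mult w = B ^ (finrank ℚ K - 1) := by
      rw [← Finset.prod_erase_mul _ _ (Finset.mem_univ w₀),
        Finset.prod_congr rfl (fun w hw => by rw [hfw w (Finset.ne_of_mem_erase hw)]),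
        Finset.prod_pow_eq_pow_sum,
        show ∑ w ∈ Finset.univ.erase w₀, mult w = finrank ℚ K - 2 from by omega,
        hfw₀, hmult, NNReal.sq_sqrt, ← pow_succ,
        show finrank ℚ K - 2 + 1 = finrank ℚ K - 1 from by omega]
    have hvol : minkowskiBound K ↑1 < volume (convexBodyLT' K f ⟨w₀, hw₀⟩) := by
      rw [convexBodyLT'_volume, hprod]
      refine lt_of_le_of_lt (my_mink_le K) (lt_of_lt_of_le hB ?_)
      have h9 : (2 : ℝ≥0∞)⁻¹ * (B : ℝ≥0∞) ^ (finrank ℚ K - 1) ≤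
          (((B ^ (finrank ℚ K - 1) : ℝ≥0)) : ℝ≥0∞) := by
        rw [ENNReal.coe_pow]
        calc (2 : ℝ≥0∞)⁻¹ * ((B : ℝ≥0) : ℝ≥0∞) ^ (finrank ℚ K - 1)
            ≤ 1 * ((B : ℝ≥0) : ℝ≥0∞) ^ (finrank ℚ K - 1) := by
              gcongr
              exact ENNReal.inv_le_one.mpr one_le_two
          _ = ((B : ℝ≥0) : ℝ≥0∞) ^ (finrank ℚ K - 1) := one_mul _
      refine le_trans h9 ?_
      exact le_mul_of_one_le_left zero_le
        (by exact_mod_cast one_le_convexBodyLT'Factor K)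
    obtain ⟨a, h_nz, h_le, h_re, h_im⟩ := exists_ne_zero_mem_ringOfIntegers_lt' K ⟨w₀, hw₀⟩ hvol
    have hsqB : ((NNReal.sqrt B : ℝ≥0) : ℝ) ≤ (B : ℝ) := by
      rw [Real.coe_sqrt]
      nlinarith [Real.sq_sqrt (by positivity : (0:ℝ) ≤ (B:ℝ)),
        Real.sqrt_nonneg ((B:ℝ))]
    have hfsq : ((f w₀ : ℝ≥0) : ℝ) ^ 2 = (B : ℝ) := by
      rw [hfw₀, ← NNReal.coe_pow, NNReal.sq_sqrt]
    refine ⟨a, ?_, ?_⟩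
    · intro q hq
      obtain ⟨m, hm0, hmq⟩ := my_rat_case K a h_nz q hq
      have h2 : (a : K) = ((m : ℤ) : K) := by rw [hq, ← hmq, map_intCast]
      rw [h2, map_intCast] at h_re
      simp only [Complex.intCast_re] at h_re
      have : (1 : ℝ) ≤ |(m : ℝ)| := by exact_mod_cast Int.one_le_abs hm0
      linarith
    · intro σ
      by_cases hσ : mk σ = w₀
      · have habs : ‖σ (a : K)‖ = ‖embedding w₀ (a : K)‖ := by
          rw [← InfinitePlace.apply, hσ, ← norm_embedding_eq]
        rw [habs]
        calc ‖embedding w₀ (a : K)‖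
            ≤ |(embedding w₀ (a : K)).re| + |(embedding w₀ (a : K)).im| :=
              Complex.norm_le_abs_re_add_abs_im _
          _ ≤ 1 + (B : ℝ) := by
              have h7 : |(embedding w₀ (a : K)).im| < (B : ℝ) := lt_of_lt_of_le h_im
                (le_of_eq hfsq)
              linarith
      · have h8 := h_le (mk σ) hσ
        rw [InfinitePlace.apply] at h8
        refine le_trans h8.le ?_
        rw [hfw _ hσ]; linarith
/-- For every `n ≥ 2` there is a constant `c > 0` depending only on `n` such that every
number field `K` of degree `n` contains a nonzero algebraic integer `α` of trace zero
with `|σ(α)| ≤ c · |d_K|^{1/(2(n−1))}` for every embedding `σ : K → ℂ`. -/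
theorem stmt_0 (n : ℕ) (hn : 2 ≤ n) :
    ∃ c : ℝ, 0 < c ∧
      ∀ (K : Type) [Field K] [NumberField K], Module.finrank ℚ K = n →
        ∃ α : NumberField.RingOfIntegers K, α ≠ 0 ∧
          Algebra.trace ℚ K (α : K) = 0 ∧
          ∀ σ : K →+* ℂ,
            ‖σ (α : K)‖ ≤
              c * |(NumberField.discr K : ℝ)| ^ ((1 : ℝ) / (2 * ((n : ℝ) - 1))) := by
  have hn2R : (2 : ℝ) ≤ (n : ℝ) := by exact_mod_cast hn
  refine ⟨2 * n * (1 + 2 ^ (2 * n)), by nlinarith [pow_pos (zero_lt_two (α := ℝ)) (2 * n)], ?_⟩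
  intro K _ _ hK
  have hn2 : 2 ≤ finrank ℚ K := hK ▸ hn
  set e : ℝ := (1 : ℝ) / (2 * ((n : ℝ) - 1)) with he_def
  have hepos : 0 < 2 * ((n : ℝ) - 1) := by linarith
  have he0 : 0 ≤ e := by positivity
  have hd1 : 1 ≤ ‖discr K‖₊ := by
    rw [← NNReal.coe_le_coe, coe_nnnorm, Int.norm_eq_abs, NNReal.coe_one]
    exact_mod_cast Int.one_le_abs (discr_ne_zero K)
  set Dn : ℝ≥0 := ‖discr K‖₊ ^ e with hDn_def
  have hDn1 : 1 ≤ Dn := by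
    calc (1 : ℝ≥0) = 1 ^ e := (NNReal.one_rpow e).symm
      _ ≤ ‖discr K‖₊ ^ e := NNReal.rpow_le_rpow hd1 he0
  set B : ℝ≥0 := 2 ^ (2 * n) * Dn with hB_def
  have hB1 : 1 ≤ B := one_le_mul (one_le_pow₀ one_le_two) hDn1
  have hDpow : Dn ^ (finrank ℚ K - 1) = NNReal.sqrt ‖discr K‖₊ := by
    rw [hK, hDn_def, ← NNReal.rpow_natCast (‖discr K‖₊ ^ e) (n - 1), ← NNReal.rpow_mul]
    rw [show e * ((n - 1 : ℕ) : ℝ) = 1 / 2 by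
      rw [Nat.cast_sub (by omega), Nat.cast_one, he_def]
      have hne : (n : ℝ) - 1 ≠ 0 := by linarith
      field_simp]
    rw [NNReal.sqrt_eq_rpow]
  have hS : 0 < NNReal.sqrt ‖discr K‖₊ := NNReal.sqrt_pos.mpr (lt_of_lt_of_le zero_lt_one hd1)
  have hkey : (2 : ℝ≥0) ^ finrank ℚ K * NNReal.sqrt ‖discr K‖₊ <
      2⁻¹ * B ^ (finrank ℚ K - 1) := by
    rw [hB_def, mul_pow, hDpow, hK]
    have h1 : n + 2 ≤ 2 * n * (n - 1) := by
      calc n + 2 ≤ 2 * n * 1 := by omega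
        _ ≤ 2 * n * (n - 1) := Nat.mul_le_mul_left _ (by omega)
    have h2 : ((2 : ℝ≥0) ^ (2 * n)) ^ (n - 1) = 2 ^ (2 * n * (n - 1)) := by rw [← pow_mul]
    have h3 : (2 : ℝ≥0) ^ n < 2⁻¹ * 2 ^ (2 * n * (n - 1)) := by
      calc (2 : ℝ≥0) ^ n < 2 ^ (n + 1) := by
            exact pow_lt_pow_right₀ one_lt_two (lt_add_one n)
        _ = 2⁻¹ * 2 ^ (n + 2) := by
            have h4 : (2 : ℝ≥0) ^ (n + 2) = 2 * 2 ^ (n + 1) := by ring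
            rw [h4, ← mul_assoc, inv_mul_cancel₀ (two_ne_zero), one_mul]
        _ ≤ 2⁻¹ * 2 ^ (2 * n * (n - 1)) := by
            gcongr
            exact one_le_two
    calc (2 : ℝ≥0) ^ n * NNReal.sqrt ‖discr K‖₊
        < (2⁻¹ * 2 ^ (2 * n * (n - 1))) * NNReal.sqrt ‖discr K‖₊ :=
          mul_lt_mul_of_pos_right h3 hS
      _ = 2⁻¹ * (((2 : ℝ≥0) ^ (2 * n)) ^ (n - 1) * NNReal.sqrt ‖discr K‖₊) := by
          rw [h2]; ring
  have hkey' : (2 : ℝ≥0∞) ^ finrank ℚ K * NNReal.sqrt ‖discr K‖₊ <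
      (2 : ℝ≥0∞)⁻¹ * (B : ℝ≥0∞) ^ (finrank ℚ K - 1) := by
    have h := ENNReal.coe_lt_coe.mpr hkey
    rw [ENNReal.coe_mul, ENNReal.coe_mul, ENNReal.coe_pow, ENNReal.coe_pow,
      ENNReal.coe_inv two_ne_zero] at h
    convert h using 2 <;> simp
  obtain ⟨a, hirr, hbd⟩ := my_exists_small K hn2 B hB1 hkey'
  obtain ⟨α, hα0, hαtr, hαbd⟩ := my_exists_alpha K a (1 + (B : ℝ)) hirr hbd
  refine ⟨α, hα0, hαtr, fun σ => le_trans (hαbd σ) ?_⟩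
  rw [hK]
  have hDco : (Dn : ℝ) = |(discr K : ℝ)| ^ e := by
    rw [hDn_def, NNReal.coe_rpow]
    congr 1
  rw [← hDco]
  have h1D : (1 : ℝ) ≤ (Dn : ℝ) := by exact_mod_cast hDn1
  have hBval : (B : ℝ) = 2 ^ (2 * n) * (Dn : ℝ) := by
    rw [hB_def]; push_cast; ring
  have hpow : (0 : ℝ) < 2 ^ (2 * n) := by positivity
  nlinarith [hpow, h1D, hBval, hn2R]
end

section
/- Fix nonzero complex numbers p, q, r, s, t, u. The set of ordered quadruples (V₁, V₂, V₃, V₄) of complex numbers satisfying V₁V₄ = p, V₂V₃ = q, V₁V₂² = r, V₃²V₄ = s, V₂V₄² = t, and V₁²V₃ = u has at most five elements. -/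
/-- For fixed nonzero `p, q, r, s, t, u`, the set of quadruples `(V₁, V₂, V₃, V₄)` with
`V₁V₄ = p`, `V₂V₃ = q`, `V₁V₂² = r`, `V₃²V₄ = s`, `V₂V₄² = t` and `V₁²V₃ = u` has at
most five elements. -/
theorem stmt_10 (p q r s t u : ℂ) (hp : p ≠ 0) (hq : q ≠ 0) (hr : r ≠ 0) (hs : s ≠ 0)
    (ht : t ≠ 0) (hu : u ≠ 0) :
    Set.encard {w : ℂ × ℂ × ℂ × ℂ | ∃ V₁ V₂ V₃ V₄ : ℂ, w = (V₁, V₂, V₃, V₄) ∧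
      V₁ * V₄ = p ∧ V₂ * V₃ = q ∧ V₁ * V₂ ^ 2 = r ∧ V₃ ^ 2 * V₄ = s ∧
      V₂ * V₄ ^ 2 = t ∧ V₁ ^ 2 * V₃ = u} ≤ 5 := by
  classical
  set S : Set (ℂ × ℂ × ℂ × ℂ) := {w : ℂ × ℂ × ℂ × ℂ | ∃ V₁ V₂ V₃ V₄ : ℂ,
      w = (V₁, V₂, V₃, V₄) ∧
      V₁ * V₄ = p ∧ V₂ * V₃ = q ∧ V₁ * V₂ ^ 2 = r ∧ V₃ ^ 2 * V₄ = s ∧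
      V₂ * V₄ ^ 2 = t ∧ V₁ ^ 2 * V₃ = u} with hS
  set c : ℂ := r * u ^ 2 / q ^ 2 with hc
  have hc0 : c ≠ 0 := div_ne_zero (mul_ne_zero hr (pow_ne_zero _ hu)) (pow_ne_zero _ hq)
  -- the polynomial X^5 - c
  set P : Polynomial ℂ := Polynomial.X ^ 5 - Polynomial.C c with hP
  have hPdeg : P.natDegree = 5 := by
    simp [hP, Polynomial.natDegree_X_pow_sub_C]
  have hP0 : P ≠ 0 := by
    intro h
    rw [h] at hPdeg
    simp at hPdeg
  -- properties of elements of S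
  have hmem : ∀ w ∈ S, w.1 ≠ 0 ∧ w.2.2.1 ≠ 0 ∧ w.2.2.2 ≠ 0 ∧
      w.1 * w.2.2.2 = p ∧ w.2.1 * w.2.2.1 = q ∧ w.1 * w.2.1 ^ 2 = r ∧
      w.2.2.1 ^ 2 * w.2.2.2 = s ∧ w.2.1 * w.2.2.2 ^ 2 = t ∧ w.1 ^ 2 * w.2.2.1 = u := by
    rintro w ⟨V₁, V₂, V₃, V₄, rfl, h1, h2, h3, h4, h5, h6⟩
    refine ⟨?_, ?_, ?_, h1, h2, h3, h4, h5, h6⟩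
    · intro h; simp only at h; apply hp; rw [← h1, h]; ring
    · intro h; simp only at h; apply hq; rw [← h2, h]; ring
    · intro h; simp only at h; apply hp; rw [← h1, h]; ring
  -- first coordinate is a root of P
  have himg : (fun w : ℂ × ℂ × ℂ × ℂ => w.1) '' S ⊆ ↑P.roots.toFinset := by
    rintro x ⟨w, hw, rfl⟩
    obtain ⟨h10, h30, h40, h1, h2, h3, h4, h5, h6⟩ := hmem w hw
    have hroot : w.1 ^ 5 = c := by
      rw [hc, eq_div_iff (pow_ne_zero _ hq)]
      rw [← h2, ← h3, ← h6]
      ring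
    simp only [Multiset.mem_toFinset, Finset.coe_sort_coe, Finset.mem_coe]
    rw [Polynomial.mem_roots hP0]
    simp [hP, Polynomial.IsRoot, hroot, sub_eq_zero]
  -- injectivity
  have hinj : Set.InjOn (fun w : ℂ × ℂ × ℂ × ℂ => w.1) S := by
    intro a ha b hb hab
    obtain ⟨a10, a30, a40, a1, a2, a3, a4, a5, a6⟩ := hmem a ha
    obtain ⟨b10, b30, b40, b1, b2, b3, b4, b5, b6⟩ := hmem b hb
    simp only at hab
    have h3 : a.2.2.1 = b.2.2.1 := by
      have : a.1 ^ 2 * a.2.2.1 = a.1 ^ 2 * b.2.2.1 := by rw [a6, hab, b6]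
      exact mul_left_cancel₀ (pow_ne_zero _ a10) this
    have h4 : a.2.2.2 = b.2.2.2 := by
      have : a.2.2.1 ^ 2 * a.2.2.2 = a.2.2.1 ^ 2 * b.2.2.2 := by rw [a4, h3, b4]
      exact mul_left_cancel₀ (pow_ne_zero _ a30) this
    have h2 : a.2.1 = b.2.1 := by
      have : a.2.1 * a.2.2.2 ^ 2 = b.2.1 * a.2.2.2 ^ 2 := by rw [a5, h4, b5]
      exact mul_right_cancel₀ (pow_ne_zero _ a40) this
    exact Prod.ext hab (Prod.ext h2 (Prod.ext h3 h4))
  calc S.encard = ((fun w : ℂ × ℂ × ℂ × ℂ => w.1) '' S).encard := (hinj.encard_image).symm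
    _ ≤ (↑P.roots.toFinset : Set ℂ).encard := Set.encard_le_encard himg
    _ = (P.roots.toFinset.card : ℕ∞) := Set.encard_coe_eq_coe_finsetCard _
    _ ≤ (P.roots.card : ℕ∞) := by exact_mod_cast Multiset.toFinset_card_le _
    _ ≤ (P.natDegree : ℕ∞) := by exact_mod_cast Polynomial.card_roots' P
    _ = 5 := by rw [hPdeg]; rfl
end

section
/- Fix complex numbers a, ā, b, b̄, d. The set of ordered quadruples (V₁, V₂, V₃, V₄) of nonzero complex numbers satisfying V₂V₃ = a, V₁V₄ = ā, V₁V₂² + V₃²V₄ = b, V₂V₄² + V₁²V₃ = b̄, and (V₁V₂² − V₃²V₄)(V₂V₄² − V₁²V₃) = d has at most ten elements. -/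
/-- The set of fifth roots of any complex number has at most five elements. -/
lemma encard_fifthRoots_le (v : ℂ) : Set.encard {z : ℂ | z ^ 5 = v} ≤ 5 := by
  have h : {z : ℂ | z ^ 5 = v} ⊆ ((Polynomial.nthRoots 5 v).toFinset : Set ℂ) := by
    intro z hz
    rw [Finset.mem_coe, Multiset.mem_toFinset, Polynomial.mem_nthRoots (by norm_num : 0 < 5)]
    exact hz
  calc Set.encard {z : ℂ | z ^ 5 = v}
      ≤ Set.encard ((Polynomial.nthRoots 5 v).toFinset : Set ℂ) := Set.encard_mono h
    _ = ((Polynomial.nthRoots 5 v).toFinset.card : ℕ∞) := Set.encard_coe_eq_coe_finsetCard _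
    _ ≤ ((Polynomial.nthRoots 5 v).card : ℕ∞) := by exact_mod_cast Multiset.toFinset_card_le _
    _ ≤ 5 := by exact_mod_cast Polynomial.card_nthRoots 5 v

lemma encard_singleton_prod (x : ℂ × ℂ) (Z : Set ℂ) : ({x} ×ˢ Z).encard = Z.encard := by
  rw [Set.singleton_prod]
  exact Function.Injective.encard_image (Prod.mk_right_injective x) Z

/-- Selection lemma: if `2P - b = ±s`, `2R - bbar = ±t` and `(2P-b)(2R-bbar) = d`,
then the pair `(P, R)` can take at most two values. -/
lemma pair_select (b bbar d s t : ℂ) :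
    ∃ q₁ q₂ : ℂ × ℂ, ∀ P R : ℂ,
      (2 * P - b = s ∨ 2 * P - b = -s) → (2 * R - bbar = t ∨ 2 * R - bbar = -t) →
      (2 * P - b) * (2 * R - bbar) = d → (P, R) = q₁ ∨ (P, R) = q₂ := by
  by_cases h1 : d = s * t
  · by_cases h2 : d = -(s * t)
    · have hst : s = 0 ∨ t = 0 := by
        have h0 : s * t = 0 := by linear_combination (h1.symm.trans h2) / 2
        exact mul_eq_zero.mp h0
      rcases hst with hs0 | ht0
      · refine ⟨(b / 2, (bbar + t) / 2), (b / 2, (bbar - t) / 2), ?_⟩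
        intro P R hP hR _
        subst hs0
        have hPb : P = b / 2 := by
          rcases hP with h | h <;> linear_combination h / 2
        rcases hR with h | h
        · left; rw [Prod.mk.injEq]; exact ⟨hPb, by linear_combination h / 2⟩
        · right; rw [Prod.mk.injEq]; exact ⟨hPb, by linear_combination h / 2⟩
      · refine ⟨((b + s) / 2, bbar / 2), ((b - s) / 2, bbar / 2), ?_⟩
        intro P R hP hR _
        subst ht0
        have hRb : R = bbar / 2 := by
          rcases hR with h | h <;> linear_combination h / 2
        rcases hP with h | h
        · left; rw [Prod.mk.injEq]; exact ⟨by linear_combination h / 2, hRb⟩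
        · right; rw [Prod.mk.injEq]; exact ⟨by linear_combination h / 2, hRb⟩
    · refine ⟨((b + s) / 2, (bbar + t) / 2), ((b - s) / 2, (bbar - t) / 2), ?_⟩
      intro P R hP hR hd
      rcases hP with h | h <;> rcases hR with h' | h'
      · left; rw [Prod.mk.injEq]
        exact ⟨by linear_combination h / 2, by linear_combination h' / 2⟩
      · exact absurd (by rw [h, h'] at hd; linear_combination -hd) h2
      · exact absurd (by rw [h, h'] at hd; linear_combination -hd) h2
      · right; rw [Prod.mk.injEq]
        exact ⟨by linear_combination h / 2, by linear_combination h' / 2⟩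
  · by_cases h2 : d = -(s * t)
    · refine ⟨((b + s) / 2, (bbar - t) / 2), ((b - s) / 2, (bbar + t) / 2), ?_⟩
      intro P R hP hR hd
      rcases hP with h | h <;> rcases hR with h' | h'
      · exact absurd (by rw [h, h'] at hd; linear_combination -hd) h1
      · left; rw [Prod.mk.injEq]
        exact ⟨by linear_combination h / 2, by linear_combination h' / 2⟩
      · right; rw [Prod.mk.injEq]
        exact ⟨by linear_combination h / 2, by linear_combination h' / 2⟩
      · exact absurd (by rw [h, h'] at hd; linear_combination -hd) h1
    · refine ⟨(0, 0), (0, 0), ?_⟩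
      intro P R hP hR hd
      exfalso
      rcases hP with h | h <;> rcases hR with h' | h'
      · exact h1 (by rw [h, h'] at hd; linear_combination -hd)
      · exact h2 (by rw [h, h'] at hd; linear_combination -hd)
      · exact h2 (by rw [h, h'] at hd; linear_combination -hd)
      · exact h1 (by rw [h, h'] at hd; linear_combination -hd)

/-- For fixed `(a, abar, b, bbar, d)`, the set of quadruples `(V₁, V₂, V₃, V₄)` of *nonzero*
complex numbers with `V₂V₃ = a`, `V₁V₄ = abar`, `V₁V₂² + V₃²V₄ = b`,
`V₂V₄² + V₁²V₃ = bbar` and `(V₁V₂² − V₃²V₄)(V₂V₄² − V₁²V₃) = d` has at most ten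
elements. -/
theorem stmt_11 (a abar b bbar d : ℂ) :
    Set.encard {w : ℂ × ℂ × ℂ × ℂ | ∃ V₁ V₂ V₃ V₄ : ℂ, w = (V₁, V₂, V₃, V₄) ∧
      V₁ ≠ 0 ∧ V₂ ≠ 0 ∧ V₃ ≠ 0 ∧ V₄ ≠ 0 ∧
      V₂ * V₃ = a ∧ V₁ * V₄ = abar ∧
      V₁ * V₂ ^ 2 + V₃ ^ 2 * V₄ = b ∧ V₂ * V₄ ^ 2 + V₁ ^ 2 * V₃ = bbar ∧
      (V₁ * V₂ ^ 2 - V₃ ^ 2 * V₄) * (V₂ * V₄ ^ 2 - V₁ ^ 2 * V₃) = d} ≤ 10 := by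
  set T : Set (ℂ × ℂ × ℂ × ℂ) := {w : ℂ × ℂ × ℂ × ℂ | ∃ V₁ V₂ V₃ V₄ : ℂ, w = (V₁, V₂, V₃, V₄) ∧
      V₁ ≠ 0 ∧ V₂ ≠ 0 ∧ V₃ ≠ 0 ∧ V₄ ≠ 0 ∧
      V₂ * V₃ = a ∧ V₁ * V₄ = abar ∧
      V₁ * V₂ ^ 2 + V₃ ^ 2 * V₄ = b ∧ V₂ * V₄ ^ 2 + V₁ ^ 2 * V₃ = bbar ∧
      (V₁ * V₂ ^ 2 - V₃ ^ 2 * V₄) * (V₂ * V₄ ^ 2 - V₁ ^ 2 * V₃) = d} with hT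
  obtain ⟨s, hs⟩ := IsAlgClosed.exists_pow_nat_eq (b ^ 2 - 4 * (a ^ 2 * abar)) (by norm_num : 0 < 2)
  obtain ⟨t, ht⟩ :=
    IsAlgClosed.exists_pow_nat_eq (bbar ^ 2 - 4 * (a * abar ^ 2)) (by norm_num : 0 < 2)
  obtain ⟨q₁, q₂, hq⟩ := pair_select b bbar d s t
  set Z : ℂ × ℂ → Set ℂ := fun q => {z : ℂ | z ^ 5 = a * q.1 ^ 2 / (bbar - q.2)} with hZ
  set f : ℂ × ℂ × ℂ × ℂ → (ℂ × ℂ) × ℂ :=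
    fun w => ((w.1 * w.2.1 ^ 2, w.2.1 * w.2.2.2 ^ 2), w.2.1) with hf
  have hinj : Set.InjOn f T := by
    rintro w hw w' hw' hww
    obtain ⟨V₁, V₂, V₃, V₄, rfl, h1, h2, h3, h4, ha, hab, hb, hbb, hd⟩ := hw
    obtain ⟨W₁, W₂, W₃, W₄, rfl, g1, g2, g3, g4, ga, gab, gb, gbb, gd⟩ := hw'
    simp only [hf, Prod.mk.injEq] at hww ⊢
    obtain ⟨⟨hPeq, _⟩, hzeq⟩ := hww
    subst hzeq
    have e1 : V₁ = W₁ := mul_right_cancel₀ (pow_ne_zero 2 h2) hPeq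
    refine ⟨e1, rfl, ?_, ?_⟩
    · exact mul_left_cancel₀ h2 (ha.trans ga.symm)
    · have h5 : V₁ * V₄ = V₁ * W₄ := by rw [hab, e1]; exact gab.symm
      exact mul_left_cancel₀ h1 h5
  have himg : f '' T ⊆ ({q₁} ×ˢ Z q₁) ∪ ({q₂} ×ˢ Z q₂) := by
    rintro _ ⟨w, hw, rfl⟩
    obtain ⟨V₁, V₂, V₃, V₄, rfl, h1, h2, h3, h4, ha, hab, hb, hbb, hd⟩ := hw
    simp only [hf]
    have hPpm : 2 * (V₁ * V₂ ^ 2) - b = s ∨ 2 * (V₁ * V₂ ^ 2) - b = -s := by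
      have key : (2 * (V₁ * V₂ ^ 2) - b - s) * (2 * (V₁ * V₂ ^ 2) - b + s) = 0 := by
        linear_combination -hs + 4 * (V₁ * V₂ ^ 2) * hb - 4 * abar * (a + V₂ * V₃) * ha
          - 4 * (V₂ * V₃) ^ 2 * hab
      rcases mul_eq_zero.mp key with h | h
      · left; linear_combination h
      · right; linear_combination h
    have hRpm : 2 * (V₂ * V₄ ^ 2) - bbar = t ∨ 2 * (V₂ * V₄ ^ 2) - bbar = -t := by
      have key : (2 * (V₂ * V₄ ^ 2) - bbar - t) * (2 * (V₂ * V₄ ^ 2) - bbar + t) = 0 := by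
        linear_combination -ht + 4 * (V₂ * V₄ ^ 2) * hbb - 4 * a * (abar + V₁ * V₄) * hab
          - 4 * (V₁ * V₄) ^ 2 * ha
      rcases mul_eq_zero.mp key with h | h
      · left; linear_combination h
      · right; linear_combination h
    have hdq : (2 * (V₁ * V₂ ^ 2) - b) * (2 * (V₂ * V₄ ^ 2) - bbar) = d := by
      linear_combination hd + (2 * (V₂ * V₄ ^ 2) - bbar) * hb + (V₁ * V₂ ^ 2 - V₃ ^ 2 * V₄) * hbb
    have hS : bbar - V₂ * V₄ ^ 2 = V₁ ^ 2 * V₃ := by linear_combination -hbb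
    have hSne : bbar - V₂ * V₄ ^ 2 ≠ 0 := by
      rw [hS]; exact mul_ne_zero (pow_ne_zero 2 h1) h3
    have hz : V₂ ^ 5 = a * (V₁ * V₂ ^ 2) ^ 2 / (bbar - V₂ * V₄ ^ 2) := by
      rw [eq_div_iff hSne, hS]
      linear_combination (V₁ ^ 2 * V₂ ^ 4) * ha
    rcases hq _ _ hPpm hRpm hdq with hc | hc
    · refine Or.inl ⟨by simp [hc], ?_⟩
      rw [← hc]
      simpa only [hZ, Set.mem_setOf_eq] using hz
    · refine Or.inr ⟨by simp [hc], ?_⟩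
      rw [← hc]
      simpa only [hZ, Set.mem_setOf_eq] using hz
  calc T.encard = (f '' T).encard := (Set.InjOn.encard_image hinj).symm
    _ ≤ (({q₁} ×ˢ Z q₁) ∪ ({q₂} ×ˢ Z q₂)).encard := Set.encard_mono himg
    _ ≤ ({q₁} ×ˢ Z q₁).encard + ({q₂} ×ˢ Z q₂).encard := Set.encard_union_le _ _
    _ ≤ 5 + 5 := by
        refine add_le_add ?_ ?_ <;>
          (rw [encard_singleton_prod]; exact encard_fifthRoots_le _)
    _ = 10 := by norm_num
end

section
/- Let R be a commutative ring, let ζ ∈ R satisfy 1 + ζ + ζ² + ζ³ + ζ⁴ = 0 and ζ⁵ = 1, and let V₁, V₂, V₃, V₄ ∈ R. Set s = ζ² + ζ³ − ζ − ζ⁴. Then s² = 5 and (2(ζ − ζ⁴)(V₁V₂² − V₃²V₄))² = (2s − 10)·((V₁V₂² + V₃²V₄)² − 4·(V₁V₄)·(V₂V₃)²). -/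
/-- Let `ζ` satisfy `1 + ζ + ζ² + ζ³ + ζ⁴ = 0` and `ζ⁵ = 1`, and set
`s = ζ² + ζ³ − ζ − ζ⁴` (the Gauss sum, playing the role of `√5`). Then `s² = 5` and
`(2(ζ − ζ⁴)(V₁V₂² − V₃²V₄))² = (2s − 10)·(B² − 4ĀA²)` where `B = V₁V₂² + V₃²V₄`,
`Ā = V₁V₄`, `A = V₂V₃`. -/
theorem stmt_12 (R : Type*) [CommRing R] (ζ : R)
    (h1 : 1 + ζ + ζ ^ 2 + ζ ^ 3 + ζ ^ 4 = 0) (h5 : ζ ^ 5 = 1) (V₁ V₂ V₃ V₄ : R)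
    (s : R) (hs : s = ζ ^ 2 + ζ ^ 3 - ζ - ζ ^ 4) :
    s ^ 2 = 5 ∧
    (2 * (ζ - ζ ^ 4) * (V₁ * V₂ ^ 2 - V₃ ^ 2 * V₄)) ^ 2 =
      (2 * s - 10) *
        ((V₁ * V₂ ^ 2 + V₃ ^ 2 * V₄) ^ 2 - 4 * (V₁ * V₄) * (V₂ * V₃) ^ 2) := by
  subst hs
  constructor
  · linear_combination (ζ ^ 3 - 2 * ζ ^ 2 - ζ + 4) * h5 - h1
  · linear_combination (V₁ * V₂ ^ 2 - V₃ ^ 2 * V₄) ^ 2 *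
      ((4 * ζ ^ 3 - 8) * h5 + 2 * h1)
end
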